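/- arXiv:2308.05814 — 2 statements merged into one kernel-verified Lean document; each statement's English description precedes it below -/
import Mathlib

section
/- Let A ∈ ℝ^{m×n} with m ≥ n have SVD A = UΣVᵀ partitioned at index k, let Ω ∈ ℝ^{n×ℓ} (k ≤ ℓ ≤ n) be such that Ω̂₁ = V_kᵀΩ has full row rank, and let Q ∈ ℝ^{m×ℓ} be the orthonormal factor produced by randomized subspace iteration with q ≥ 0 steps applied to A and Ω. Then ‖(I − QQᵀ)A‖₂² ≤ ‖Σ⊥‖₂² + γ_k^{4q} · ‖Σ⊥ Ω̂₂ Ω̂₁†‖₂². -/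
open MeasureTheory Matrix

noncomputable section

/-- Spectral norm (largest singular value) of a real matrix. -/
def spec {m n : ℕ} (A : Matrix (Fin m) (Fin n) ℝ) : ℝ :=
  ‖LinearMap.toContinuousLinearMap (Matrix.toEuclideanLin A)‖

/- Moore–Penrose pseudoinverse, via the four Penrose conditions. -/
open scoped Classical in
def pinv {m n : ℕ} (A : Matrix (Fin m) (Fin n) ℝ) : Matrix (Fin n) (Fin m) ℝ :=
  if h : ∃ B : Matrix (Fin n) (Fin m) ℝ,
      A * B * A = A ∧ B * A * B = B ∧ (A * B)ᵀ = A * B ∧ (B * A)ᵀ = B * A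
  then h.choose else 0

/-- The first `k` columns of an `n×n` matrix. -/
def colsLeft {n : ℕ} (k : ℕ) (h : k ≤ n) (V : Matrix (Fin n) (Fin n) ℝ) :
    Matrix (Fin n) (Fin k) ℝ :=
  Matrix.of fun i j => V i (Fin.castLE h j)

/-- The last `n - k` columns of an `n×n` matrix. -/
def colsRight {n : ℕ} (k : ℕ) (V : Matrix (Fin n) (Fin n) ℝ) :
    Matrix (Fin n) (Fin (n - k)) ℝ :=
  Matrix.of fun i j => V i ⟨k + j.1, by have := j.isLt; omega⟩

/-- The trailing diagonal block `Σ⊥ = diag(σ_{k+1},…,σ_n)`. -/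
def tailDiag {n : ℕ} (k : ℕ) (σ : Fin n → ℝ) :
    Matrix (Fin (n - k)) (Fin (n - k)) ℝ :=
  Matrix.diagonal fun j => σ ⟨k + j.1, by have := j.isLt; omega⟩

def en {t : ℕ} (v : Fin t → ℝ) : ℝ := ‖(WithLp.equiv 2 (Fin t → ℝ)).symm v‖

lemma en_eq {t : ℕ} (v : Fin t → ℝ) : en v = Real.sqrt (∑ i, v i ^ 2) := by
  rw [en, EuclideanSpace.norm_eq]
  congr 1
  refine Finset.sum_congr rfl fun i _ => ?_
  simp [Real.norm_eq_abs, sq_abs]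

lemma en_nonneg {t : ℕ} (v : Fin t → ℝ) : 0 ≤ en v := norm_nonneg _

lemma en_sq {t : ℕ} (v : Fin t → ℝ) : en v ^ 2 = ∑ i, v i ^ 2 := by
  rw [en_eq, Real.sq_sqrt (Finset.sum_nonneg fun i _ => sq_nonneg _)]

lemma en_sub_le {t : ℕ} (a b : Fin t → ℝ) : en (a - b) ≤ en a + en b := by
  have : (WithLp.equiv 2 (Fin t → ℝ)).symm (a - b)
      = (WithLp.equiv 2 (Fin t → ℝ)).symm a - (WithLp.equiv 2 (Fin t → ℝ)).symm b := rfl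
  rw [en, this]
  exact norm_sub_le _ _

lemma spec_nonneg {m n : ℕ} (A : Matrix (Fin m) (Fin n) ℝ) : 0 ≤ spec A := norm_nonneg _

lemma spec_le {m n : ℕ} (A : Matrix (Fin m) (Fin n) ℝ) {c : ℝ} (hc : 0 ≤ c)
    (h : ∀ v : Fin n → ℝ, en (A.mulVec v) ≤ c * en v) : spec A ≤ c := by
  refine ContinuousLinearMap.opNorm_le_bound _ hc fun x => ?_
  have hx := h ((WithLp.equiv 2 (Fin n → ℝ)) x)
  have h1 : ((WithLp.equiv 2 (Fin n → ℝ)).symm ((WithLp.equiv 2 (Fin n → ℝ)) x)) = x :=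
    (WithLp.equiv 2 (Fin n → ℝ)).symm_apply_apply x
  rw [en, en, h1] at hx
  simpa [Matrix.toEuclideanLin_apply] using hx

lemma en_mulVec_le {m n : ℕ} (A : Matrix (Fin m) (Fin n) ℝ) (v : Fin n → ℝ) :
    en (A.mulVec v) ≤ spec A * en v := by
  have := (LinearMap.toContinuousLinearMap (Matrix.toEuclideanLin A)).le_opNorm
    ((WithLp.equiv 2 (Fin n → ℝ)).symm v)
  simpa [en, spec, Matrix.toEuclideanLin_apply] using this

lemma spec_mul_le {m n p : ℕ} (A : Matrix (Fin m) (Fin n) ℝ) (B : Matrix (Fin n) (Fin p) ℝ) :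
    spec (A * B) ≤ spec A * spec B := by
  refine spec_le _ (mul_nonneg (spec_nonneg A) (spec_nonneg B)) fun v => ?_
  rw [← Matrix.mulVec_mulVec]
  calc en (A.mulVec (B.mulVec v)) ≤ spec A * en (B.mulVec v) := en_mulVec_le _ _
    _ ≤ spec A * (spec B * en v) :=
      mul_le_mul_of_nonneg_left (en_mulVec_le _ _) (spec_nonneg A)
    _ = spec A * spec B * en v := by ring

lemma orth_entry {m n : ℕ} {U : Matrix (Fin m) (Fin n) ℝ} (hU : Uᵀ * U = 1) (j j' : Fin n) :
    ∑ i, U i j * U i j' = if j = j' then 1 else 0 := by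
  have := congrFun (congrFun hU j) j'
  simpa [Matrix.mul_apply, Matrix.one_apply, Matrix.transpose_apply] using this

lemma en_mulVec_orth {m n : ℕ} {U : Matrix (Fin m) (Fin n) ℝ} (hU : Uᵀ * U = 1)
    (v : Fin n → ℝ) : en (U.mulVec v) = en v := by
  rw [en_eq, en_eq]
  congr 1
  calc ∑ i, (U.mulVec v) i ^ 2
      = ∑ i, ∑ j, ∑ j', (U i j * U i j') * (v j * v j') := by
        refine Finset.sum_congr rfl fun i _ => ?_
        rw [Matrix.mulVec, dotProduct]
        rw [sq, Finset.sum_mul_sum]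
        exact Finset.sum_congr rfl fun j _ => Finset.sum_congr rfl fun j' _ => by ring
    _ = ∑ j, ∑ j', (∑ i, U i j * U i j') * (v j * v j') := by
        rw [Finset.sum_comm]
        refine Finset.sum_congr rfl fun j _ => ?_
        rw [Finset.sum_comm]
        refine Finset.sum_congr rfl fun j' _ => ?_
        rw [Finset.sum_mul]
    _ = ∑ j, v j ^ 2 := by
        refine Finset.sum_congr rfl fun j _ => ?_
        rw [Finset.sum_congr rfl fun j' (_ : j' ∈ Finset.univ) => by rw [orth_entry hU]]
        simp [sq]

lemma sum_split {n k : ℕ} (hkn : k ≤ n) (f : Fin n → ℝ) :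
    ∑ i, f i = (∑ a : Fin k, f (Fin.castLE hkn a))
      + ∑ b : Fin (n - k), f ⟨k + b.1, by omega⟩ := by
  classical
  set e : Fin k ⊕ Fin (n - k) → Fin n :=
    Sum.elim (fun a => Fin.castLE hkn a) (fun b => (⟨k + b.1, by omega⟩ : Fin n)) with he
  have hb : Function.Bijective e := by
    rw [Fintype.bijective_iff_injective_and_card]
    constructor
    · rintro (a | a) (b | b) h <;>
        simp only [he, Sum.elim_inl, Sum.elim_inr, Fin.ext_iff, Fin.coe_castLE] at h <;>
        first
          | (exact congrArg Sum.inl (Fin.ext h))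
          | (exact congrArg Sum.inr (Fin.ext (by omega)))
          | (exact absurd h (by omega))
    · simp; omega
  rw [← Fintype.sum_bijective e hb (fun s => f (e s)) f (fun _ => rfl),
    Fintype.sum_sum_type]
  rfl

lemma cs_two {p q a b : ℝ} (hp : 0 ≤ p) (hq : 0 ≤ q) (ha : 0 ≤ a) (hb : 0 ≤ b) :
    p * a + q * b ≤ Real.sqrt (p ^ 2 + q ^ 2) * Real.sqrt (a ^ 2 + b ^ 2) := by
  rw [← Real.sqrt_mul (by positivity)]
  have h1 : p * a + q * b = Real.sqrt ((p * a + q * b) ^ 2) := by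
    rw [Real.sqrt_sq (by positivity)]
  rw [h1]
  apply Real.sqrt_le_sqrt
  nlinarith [sq_nonneg (p * b - q * a)]

lemma proj_bound {m l : ℕ} {Q : Matrix (Fin m) (Fin l) ℝ} (hQ : Qᵀ * Q = 1)
    (v : Fin m → ℝ) (u : Fin l → ℝ) :
    en (v - Q.mulVec (Qᵀ.mulVec v)) ≤ en (v - Q.mulVec u) := by
  set r : Fin m → ℝ := v - Q.mulVec (Qᵀ.mulVec v) with hr
  set y : Fin l → ℝ := Qᵀ.mulVec v - u with hy
  have hQr : Qᵀ.mulVec r = 0 := by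
    rw [hr, Matrix.mulVec_sub, Matrix.mulVec_mulVec _ (Qᵀ) Q, hQ]
    simp
  have hdecomp : v - Q.mulVec u = r + Q.mulVec y := by
    rw [hr, hy, Matrix.mulVec_sub]
    abel
  have hcross : ∑ i, r i * (Q.mulVec y) i = 0 := by
    calc ∑ i, r i * (Q.mulVec y) i
        = ∑ i, ∑ j, Q i j * r i * y j := by
          refine Finset.sum_congr rfl fun i _ => ?_
          rw [Matrix.mulVec, dotProduct, Finset.mul_sum]
          exact Finset.sum_congr rfl fun j _ => by ring
      _ = ∑ j, (Qᵀ.mulVec r) j * y j := by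
          rw [Finset.sum_comm]
          refine Finset.sum_congr rfl fun j _ => ?_
          rw [Matrix.mulVec, dotProduct, Finset.sum_mul]
          simp only [Matrix.transpose_apply]
      _ = 0 := by rw [hQr]; simp
  have hsum : ∑ i, (v - Q.mulVec u) i ^ 2
      = (∑ i, r i ^ 2) + ∑ i, (Q.mulVec y) i ^ 2 := by
    rw [hdecomp]
    have : ∀ i, (r + Q.mulVec y) i ^ 2
        = r i ^ 2 + 2 * (r i * (Q.mulVec y) i) + (Q.mulVec y) i ^ 2 := fun i => by
      simp [Pi.add_apply]; ring
    rw [Finset.sum_congr rfl fun i _ => this i]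
    rw [Finset.sum_add_distrib, Finset.sum_add_distrib, ← Finset.mul_sum, hcross]
    ring
  rw [en_eq, en_eq]
  apply Real.sqrt_le_sqrt
  rw [hsum]
  have : 0 ≤ ∑ i, (Q.mulVec y) i ^ 2 := Finset.sum_nonneg fun i _ => sq_nonneg _
  linarith

lemma en_diag_le {t : ℕ} {f : Fin t → ℝ} {c : ℝ} (hc : 0 ≤ c) (h : ∀ i, |f i| ≤ c)
    (v : Fin t → ℝ) : en ((Matrix.diagonal f).mulVec v) ≤ c * en v := by
  rw [en_eq, en_eq, ← Real.sqrt_sq hc, ← Real.sqrt_mul (sq_nonneg c)]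
  apply Real.sqrt_le_sqrt
  rw [Finset.mul_sum]
  refine Finset.sum_le_sum fun i _ => ?_
  rw [Matrix.mulVec_diagonal]
  calc (f i * v i) ^ 2 = f i ^ 2 * v i ^ 2 := by ring
    _ ≤ c ^ 2 * v i ^ 2 := by
        apply mul_le_mul_of_nonneg_right _ (sq_nonneg _)
        calc f i ^ 2 = |f i| ^ 2 := (sq_abs _).symm
          _ ≤ c ^ 2 := pow_le_pow_left₀ (abs_nonneg _) (h i) 2

lemma spec_diag_le {t : ℕ} {f : Fin t → ℝ} {c : ℝ} (hc : 0 ≤ c) (h : ∀ i, |f i| ≤ c) :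
    spec (Matrix.diagonal f) ≤ c :=
  spec_le _ hc (en_diag_le hc h)

lemma pinv_right_inv {k l : ℕ} {M : Matrix (Fin k) (Fin l) ℝ} (h : M.rank = k) :
    M * pinv M = 1 := by
  classical
  have hsurj : LinearMap.range M.mulVecLin = ⊤ := by
    apply Submodule.eq_top_of_finrank_eq
    rw [← Matrix.rank, h, Module.finrank_fin_fun]
  obtain ⟨g, hg⟩ := M.mulVecLin.exists_rightInverse_of_surjective hsurj
  set B₀ : Matrix (Fin l) (Fin k) ℝ := LinearMap.toMatrix' g with hB₀def
  have hMB₀ : M * B₀ = 1 := by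
    have h1 : M.mulVecLin = Matrix.toLin' M := rfl
    rw [← LinearMap.toMatrix'_toLin' M, hB₀def, ← LinearMap.toMatrix'_comp, ← h1, hg,
      LinearMap.toMatrix'_id]
  -- M * Mᵀ is invertible
  have hunit : IsUnit (M * Mᵀ) := by
    rw [← Matrix.mulVec_injective_iff_isUnit]
    have hker : ∀ z : Fin k → ℝ, (M * Mᵀ).mulVec z = 0 → z = 0 := by
      intro z hz
      have h2 : (Mᵀ.mulVec z) ⬝ᵥ (Mᵀ.mulVec z) = 0 := by
        have h0 : z ⬝ᵥ ((M * Mᵀ).mulVec z) = 0 := by rw [hz]; simp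
        rw [← Matrix.mulVec_mulVec, Matrix.dotProduct_mulVec] at h0
        rw [Matrix.mulVec_transpose] at h0 ⊢
        exact h0
      have h3 : Mᵀ.mulVec z = 0 := by
        funext i
        have hsum : ∑ i, (Mᵀ.mulVec z) i ^ 2 = 0 := by
          rw [← h2]; simp [dotProduct, sq]
        have := (Finset.sum_eq_zero_iff_of_nonneg
          (fun i _ => sq_nonneg ((Mᵀ.mulVec z) i))).mp hsum i (Finset.mem_univ i)
        exact pow_eq_zero_iff (n := 2) (by norm_num) |>.mp this
      calc z = (1 : Matrix (Fin k) (Fin k) ℝ)ᵀ.mulVec z := by simp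
        _ = (B₀ᵀ * Mᵀ).mulVec z := by rw [← hMB₀, Matrix.transpose_mul]
        _ = B₀ᵀ.mulVec (Mᵀ.mulVec z) := (Matrix.mulVec_mulVec z B₀ᵀ Mᵀ).symm
        _ = 0 := by rw [h3]; simp
    intro a b hab
    have h4 : (M * Mᵀ).mulVec (a - b) = 0 := by rw [Matrix.mulVec_sub, hab, sub_self]
    exact sub_eq_zero.mp (hker _ h4)
  have hdet : IsUnit (M * Mᵀ).det := (Matrix.isUnit_iff_isUnit_det _).mp hunit
  set N : Matrix (Fin k) (Fin k) ℝ := (M * Mᵀ)⁻¹ with hN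
  have hMMN : (M * Mᵀ) * N = 1 := Matrix.mul_nonsing_inv _ hdet
  set B : Matrix (Fin l) (Fin k) ℝ := Mᵀ * N with hB
  have hMB : M * B = 1 := by rw [hB, ← Matrix.mul_assoc, hMMN]
  have hNsymm : Nᵀ = N := by
    rw [hN, Matrix.transpose_nonsing_inv]
    congr 1
    rw [Matrix.transpose_mul, Matrix.transpose_transpose]
  have hex : ∃ B' : Matrix (Fin l) (Fin k) ℝ,
      M * B' * M = M ∧ B' * M * B' = B' ∧ (M * B')ᵀ = M * B' ∧ (B' * M)ᵀ = B' * M := by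
    refine ⟨B, ?_, ?_, ?_, ?_⟩
    · rw [hMB, Matrix.one_mul]
    · rw [Matrix.mul_assoc, hMB, Matrix.mul_one]
    · rw [hMB]; simp
    · rw [hB, Matrix.transpose_mul, Matrix.transpose_mul, hNsymm, Matrix.transpose_transpose,
        Matrix.mul_assoc]
  -- unfold pinv
  unfold pinv
  rw [dif_pos hex]
  obtain ⟨h1, h2, h3, h4⟩ := hex.choose_spec
  calc M * hex.choose = M * hex.choose * 1 := by rw [Matrix.mul_one]
    _ = M * hex.choose * (M * B) := by rw [hMB]
    _ = (M * hex.choose * M) * B := (Matrix.mul_assoc _ _ _).symm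
    _ = M * B := by rw [h1]
    _ = 1 := hMB


set_option maxHeartbeats 4000000 in
/-- **Structural bound for randomized subspace iteration.**
If `A = U Σ Vᵀ` is an SVD of `A ∈ ℝ^{m×n}` (`m ≥ n`), `Ω ∈ ℝ^{n×ℓ}` (`k ≤ ℓ ≤ n`) is such
that `Ω̂₁ = V_kᵀΩ` has full row rank, and `Q` is the orthonormal factor of a thin QR
factorization of `Y = (AAᵀ)^q A Ω`, then
`‖(I − QQᵀ)A‖₂² ≤ ‖Σ⊥‖₂² + γ_k^{4q} ‖Σ⊥ Ω̂₂ Ω̂₁†‖₂²`. -/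
theorem structural_bound
    (m n k ℓ q : ℕ) (hmn : n ≤ m) (hk0 : 0 < k) (hkn : k < n) (hkl : k ≤ ℓ) (hln : ℓ ≤ n)
    (σ : Fin n → ℝ) (hσ0 : ∀ i, 0 ≤ σ i)
    (hσmono : ∀ i j : Fin n, i ≤ j → σ j ≤ σ i)
    (hgap : σ ⟨k, hkn⟩ < σ ⟨k - 1, Nat.lt_of_le_of_lt (Nat.sub_le k 1) hkn⟩)
    (U : Matrix (Fin m) (Fin n) ℝ) (V : Matrix (Fin n) (Fin n) ℝ)
    (hU : Uᵀ * U = 1) (hV : Vᵀ * V = 1)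
    (A : Matrix (Fin m) (Fin n) ℝ) (hA : A = U * Matrix.diagonal σ * Vᵀ)
    (W : Matrix (Fin n) (Fin ℓ) ℝ)
    (hrank : ((colsLeft k hkn.le V)ᵀ * W).rank = k)
    (Q : Matrix (Fin m) (Fin ℓ) ℝ) (hQ : Qᵀ * Q = 1)
    (hQR : ∃ R : Matrix (Fin ℓ) (Fin ℓ) ℝ, (A * Aᵀ) ^ q * A * W = Q * R) :
    spec ((1 - Q * Qᵀ) * A) ^ 2 ≤
      spec (tailDiag k σ) ^ 2 +
        (σ ⟨k, hkn⟩ / σ ⟨k - 1, Nat.lt_of_le_of_lt (Nat.sub_le k 1) hkn⟩) ^ (4 * q) *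
          spec (tailDiag k σ * ((colsRight k V)ᵀ * W) * pinv ((colsLeft k hkn.le V)ᵀ * W)) ^ 2 := by
  obtain ⟨R, hR⟩ := hQR
  -- notation
  set κ : Fin n := ⟨k, hkn⟩ with hκ
  set κ' : Fin n := ⟨k - 1, Nat.lt_of_le_of_lt (Nat.sub_le k 1) hkn⟩ with hκ'
  have hκ'pos : 0 < σ κ' := lt_of_le_of_lt (hσ0 κ) hgap
  set d : Fin k → ℝ := fun j => σ (Fin.castLE hkn.le j) with hd
  have hd_ge : ∀ j, σ κ' ≤ d j := by
    intro j
    refine hσmono _ _ ?_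
    simp only [Fin.le_def, Fin.coe_castLE, hκ']
    have := j.isLt; omega
  have hd_pos : ∀ j, 0 < d j := fun j => lt_of_lt_of_le hκ'pos (hd_ge j)
  set σ₂ : Fin (n - k) → ℝ := fun b => σ ⟨k + b.1, by have := b.isLt; omega⟩ with hσ₂
  have hσ₂le : ∀ b, σ₂ b ≤ σ κ := by
    intro b
    refine hσmono _ _ ?_
    simp only [Fin.le_def, hκ]
    omega
  have hσ₂0 : ∀ b, 0 ≤ σ₂ b := fun b => hσ0 _
  -- matrices
  set Ω1 : Matrix (Fin k) (Fin ℓ) ℝ := (colsLeft k hkn.le V)ᵀ * W with hΩ1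
  set P : Matrix (Fin ℓ) (Fin k) ℝ := pinv Ω1 with hPdef
  have hP : Ω1 * P = 1 := pinv_right_inv hrank
  set Ω2 : Matrix (Fin (n - k)) (Fin ℓ) ℝ := (colsRight k V)ᵀ * W with hΩ2
  set G : Matrix (Fin n) (Fin ℓ) ℝ := Vᵀ * W with hG
  set X : Matrix (Fin (n - k)) (Fin k) ℝ := Ω2 * P with hX
  set T : Matrix (Fin (n - k)) (Fin (n - k)) ℝ := tailDiag k σ with hT
  have hTdiag : T = Matrix.diagonal σ₂ := rfl
  set Ndiag : Matrix (Fin n) (Fin n) ℝ := Matrix.diagonal (fun i => σ i ^ (2 * q + 1)) with hNd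
  set S1inv : Matrix (Fin k) (Fin k) ℝ :=
    Matrix.diagonal (fun j => (d j ^ (2 * q + 1))⁻¹) with hS1
  set F : Matrix (Fin ℓ) (Fin k) ℝ := P * S1inv with hF
  set K : Matrix (Fin n) (Fin k) ℝ := G * P with hK
  set Bmat : Matrix (Fin n) (Fin k) ℝ := Ndiag * (K * S1inv) with hBm
  -- entries of G
  have hG1 : ∀ (a : Fin k) (t : Fin ℓ), G (Fin.castLE hkn.le a) t = Ω1 a t := by
    intro a t
    simp [hG, hΩ1, Matrix.mul_apply, colsLeft, Matrix.transpose_apply]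
  have hG2 : ∀ (b : Fin (n - k)) (t : Fin ℓ) (pf : k + b.1 < n),
      G ⟨k + b.1, pf⟩ t = Ω2 b t := by
    intro b t pf
    simp [hG, hΩ2, Matrix.mul_apply, colsRight, Matrix.transpose_apply]
  -- entries of K
  have hK1 : ∀ (a j : Fin k), K (Fin.castLE hkn.le a) j = (1 : Matrix (Fin k) (Fin k) ℝ) a j := by
    intro a j
    rw [← hP, hK, Matrix.mul_apply, Matrix.mul_apply]
    exact Finset.sum_congr rfl fun t _ => by rw [hG1]
  have hK2 : ∀ (b : Fin (n - k)) (j : Fin k) (pf : k + b.1 < n),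
      K ⟨k + b.1, pf⟩ j = X b j := by
    intro b j pf
    rw [hK, hX, Matrix.mul_apply, Matrix.mul_apply]
    exact Finset.sum_congr rfl fun t _ => by rw [hG2]
  -- entries of Bmat
  have hB1 : ∀ (a j : Fin k), Bmat (Fin.castLE hkn.le a) j = if a = j then 1 else 0 := by
    intro a j
    rw [hBm, hNd, hS1, Matrix.diagonal_mul, Matrix.mul_diagonal, hK1, Matrix.one_apply]
    by_cases hij : a = j
    · subst hij
      have hif : (if a = a then (1:ℝ) else 0) = 1 := if_pos rfl
      rw [hif, one_mul]
      exact mul_inv_cancel₀ (pow_ne_zero _ (ne_of_gt (hd_pos a)))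
    · simp [hij]
  have hB2 : ∀ (b : Fin (n - k)) (j : Fin k) (pf : k + b.1 < n),
      Bmat ⟨k + b.1, pf⟩ j = σ₂ b ^ (2 * q + 1) * X b j * (d j ^ (2 * q + 1))⁻¹ := by
    intro b j pf
    rw [hBm, hNd, hS1, Matrix.diagonal_mul, Matrix.mul_diagonal, hK2]
    have : σ (⟨k + b.1, pf⟩ : Fin n) = σ₂ b := rfl
    rw [this]
    ring
  -- the comparison matrix E
  set D2 : Matrix (Fin (n - k)) (Fin (n - k)) ℝ :=
    Matrix.diagonal (fun b => σ₂ b ^ (2 * q)) with hD2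
  set D1 : Matrix (Fin k) (Fin k) ℝ := Matrix.diagonal (fun j => (d j ^ (2 * q))⁻¹) with hD1
  set E : Matrix (Fin (n - k)) (Fin k) ℝ := D2 * (T * X) * D1 with hE
  have hEentry : ∀ (b : Fin (n - k)) (j : Fin k) (pf : k + b.1 < n),
      E b j = Bmat ⟨k + b.1, pf⟩ j * d j := by
    intro b j pf
    rw [hE, hD2, hD1, hTdiag, Matrix.mul_diagonal, Matrix.diagonal_mul, Matrix.diagonal_mul, hB2 b j pf]
    have hdj : d j ≠ 0 := ne_of_gt (hd_pos j)
    have hpow : d j ^ (2 * q + 1) = d j ^ (2 * q) * d j := by rw [pow_succ]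
    field_simp [hpow]
    ring
  -- SVD power formula
  have hpow : ∀ p : ℕ, (A * Aᵀ) ^ p * A
      = U * Matrix.diagonal (fun i => σ i ^ (2 * p + 1)) * Vᵀ := by
    intro p
    induction p with
    | zero => simpa using hA
    | succ p ih =>
      have hAtA : Aᵀ * A = V * Matrix.diagonal (fun i => σ i ^ 2) * Vᵀ := by
        rw [hA]
        calc (U * Matrix.diagonal σ * Vᵀ)ᵀ * (U * Matrix.diagonal σ * Vᵀ)
            = V * Matrix.diagonal σ * (Uᵀ * U) * Matrix.diagonal σ * Vᵀ := by
              rw [Matrix.transpose_mul, Matrix.transpose_mul, Matrix.transpose_transpose,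
                Matrix.diagonal_transpose]
              simp only [Matrix.mul_assoc]
          _ = V * Matrix.diagonal (fun i => σ i ^ 2) * Vᵀ := by
              rw [hU, Matrix.mul_one]
              rw [Matrix.mul_assoc V, Matrix.diagonal_mul_diagonal]
              congr 2
              funext i
              ring
      calc (A * Aᵀ) ^ (p + 1) * A = ((A * Aᵀ) ^ p * (A * Aᵀ)) * A := by rw [pow_succ]
        _ = ((A * Aᵀ) ^ p * A) * (Aᵀ * A) := by simp only [Matrix.mul_assoc]
        _ = U * Matrix.diagonal (fun i => σ i ^ (2 * p + 1)) * Vᵀ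
            * (V * Matrix.diagonal (fun i => σ i ^ 2) * Vᵀ) := by rw [ih, hAtA]
        _ = U * Matrix.diagonal (fun i => σ i ^ (2 * p + 1)) * (Vᵀ * V)
            * Matrix.diagonal (fun i => σ i ^ 2) * Vᵀ := by simp only [Matrix.mul_assoc]
        _ = U * Matrix.diagonal (fun i => σ i ^ (2 * (p + 1) + 1)) * Vᵀ := by
            rw [hV, Matrix.mul_one, Matrix.mul_assoc U, Matrix.diagonal_mul_diagonal]
            have hfun : (fun i => σ i ^ (2 * p + 1) * σ i ^ 2)
                = fun i : Fin n => σ i ^ (2 * (p + 1) + 1) := by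
              funext i
              rw [← pow_add, show 2 * p + 1 + 2 = 2 * (p + 1) + 1 from by ring]
            rw [hfun]
  -- the key factorization Q(RF) = U Bmat
  have hZ : Q * (R * F) = U * Bmat := by
    rw [← Matrix.mul_assoc, ← hR, hpow q, hBm, hK, hG, hF]
    simp only [Matrix.mul_assoc]
    rfl
  -- pointwise bound
  have key : ∀ x : Fin n → ℝ,
      en (((1 - Q * Qᵀ) * A).mulVec x)
        ≤ Real.sqrt (spec T ^ 2 + spec E ^ 2) * en x := by
    intro x
    set xh : Fin n → ℝ := Vᵀ.mulVec x with hxh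
    set c : Fin k → ℝ := fun j => d j * xh (Fin.castLE hkn.le j) with hc
    have hexp : ((1 - Q * Qᵀ) * A).mulVec x
        = A.mulVec x - Q.mulVec (Qᵀ.mulVec (A.mulVec x)) := by
      rw [Matrix.sub_mul, Matrix.one_mul, Matrix.sub_mulVec]
      congr 1
      rw [Matrix.mulVec_mulVec, Matrix.mulVec_mulVec]
    have step1 : en (((1 - Q * Qᵀ) * A).mulVec x)
        ≤ en (A.mulVec x - Q.mulVec ((R * F).mulVec c)) := by
      rw [hexp]
      exact proj_bound hQ (A.mulVec x) ((R * F).mulVec c)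
    set gv : Fin n → ℝ := (Matrix.diagonal σ).mulVec xh - Bmat.mulVec c with hgv
    have h5 : A.mulVec x - Q.mulVec ((R * F).mulVec c) = U.mulVec gv := by
      rw [hgv, Matrix.mulVec_sub]
      congr 1
      · rw [hA, hxh, ← Matrix.mulVec_mulVec, ← Matrix.mulVec_mulVec]
      · rw [Matrix.mulVec_mulVec, hZ, ← Matrix.mulVec_mulVec]
    have htop : ∀ a : Fin k, gv (Fin.castLE hkn.le a) = 0 := by
      intro a
      have hBc : (Bmat.mulVec c) (Fin.castLE hkn.le a) = c a := by
        rw [Matrix.mulVec, dotProduct]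
        rw [Finset.sum_congr rfl fun j (_ : j ∈ Finset.univ) => by rw [hB1 a j]]
        simp
      simp only [hgv, Pi.sub_apply]
      rw [hBc, Matrix.mulVec_diagonal]
      have hca : c a = σ (Fin.castLE hkn.le a) * xh (Fin.castLE hkn.le a) := rfl
      rw [hca, sub_self]
    set x1 : Fin k → ℝ := fun j => xh (Fin.castLE hkn.le j) with hx1
    set x2 : Fin (n - k) → ℝ := fun b => xh ⟨k + b.1, by have := b.isLt; omega⟩ with hx2
    set w2 : Fin (n - k) → ℝ := T.mulVec x2 - E.mulVec x1 with hw2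
    have hbot : ∀ (b : Fin (n - k)) (pf : k + b.1 < n), gv ⟨k + b.1, pf⟩ = w2 b := by
      intro b pf
      simp only [hgv, hw2, Pi.sub_apply]
      congr 1
      · rw [Matrix.mulVec_diagonal, hTdiag, Matrix.mulVec_diagonal]
      · rw [Matrix.mulVec, Matrix.mulVec, dotProduct, dotProduct]
        refine Finset.sum_congr rfl fun j _ => ?_
        rw [hEentry b j pf, hc]
        ring
    have hgv2 : en gv = en w2 := by
      rw [en_eq, en_eq]
      congr 1
      rw [sum_split hkn.le (fun i => gv i ^ 2)]
      have h7 : (∑ a : Fin k, gv (Fin.castLE hkn.le a) ^ 2) = 0 := by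
        refine Finset.sum_eq_zero fun a _ => by rw [htop a]; ring
      have h8 : (∑ b : Fin (n - k), gv ⟨k + b.1, by omega⟩ ^ 2) = ∑ b, w2 b ^ 2 :=
        Finset.sum_congr rfl fun b _ => by rw [hbot b (by omega)]
      rw [h7, h8, zero_add]
    have h9 : en w2 ≤ spec T * en x2 + spec E * en x1 := by
      rw [hw2]
      exact (en_sub_le _ _).trans (add_le_add (en_mulVec_le _ _) (en_mulVec_le _ _))
    have h10 : spec T * en x2 + spec E * en x1
        ≤ Real.sqrt (spec T ^ 2 + spec E ^ 2) * Real.sqrt (en x2 ^ 2 + en x1 ^ 2) :=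
      cs_two (spec_nonneg _) (spec_nonneg _) (en_nonneg _) (en_nonneg _)
    have h11 : en x2 ^ 2 + en x1 ^ 2 = en xh ^ 2 := by
      rw [en_sq, en_sq, en_sq, sum_split hkn.le (fun i => xh i ^ 2), add_comm]
    have h12 : en xh = en x := by
      have hVVt : (Vᵀ)ᵀ * Vᵀ = 1 := by
        rw [Matrix.transpose_transpose]
        exact mul_eq_one_comm.mp hV
      rw [hxh]
      exact en_mulVec_orth hVVt x
    have c1 : en (((1 - Q * Qᵀ) * A).mulVec x)
        ≤ en (A.mulVec x - Q.mulVec ((R * F).mulVec c)) := step1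
    have c2 : en (A.mulVec x - Q.mulVec ((R * F).mulVec c)) = en gv := by
      rw [h5]
      exact en_mulVec_orth hU gv
    have c3 : en (((1 - Q * Qᵀ) * A).mulVec x) ≤ en w2 := by
      rw [← hgv2, ← c2]
      exact c1
    have c4 : en w2 ≤ Real.sqrt (spec T ^ 2 + spec E ^ 2) * en x := by
      refine (h9.trans h10).trans (le_of_eq ?_)
      rw [h11, Real.sqrt_sq (en_nonneg xh), h12]
    exact c3.trans c4
  -- assemble
  have hspec : spec ((1 - Q * Qᵀ) * A) ≤ Real.sqrt (spec T ^ 2 + spec E ^ 2) :=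
    spec_le _ (Real.sqrt_nonneg _) key
  have h13 : spec ((1 - Q * Qᵀ) * A) ^ 2 ≤ spec T ^ 2 + spec E ^ 2 := by
    have h := pow_le_pow_left₀ (spec_nonneg _) hspec 2
    rwa [Real.sq_sqrt (by positivity)] at h
  have hTX : T * X = T * Ω2 * P := by rw [hX]; exact (Matrix.mul_assoc T Ω2 P).symm
  have e3 : spec D2 ≤ σ κ ^ (2 * q) := by
    rw [hD2]
    refine spec_diag_le (pow_nonneg (hσ0 κ) _) fun b => ?_
    rw [abs_of_nonneg (pow_nonneg (hσ₂0 b) _)]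
    exact pow_le_pow_left₀ (hσ₂0 b) (hσ₂le b) _
  have e4 : spec D1 ≤ (σ κ' ^ (2 * q))⁻¹ := by
    rw [hD1]
    refine spec_diag_le (inv_nonneg.2 (pow_nonneg (hσ0 κ') _)) fun j => ?_
    rw [abs_of_nonneg (inv_nonneg.2 (pow_nonneg (le_of_lt (hd_pos j)) _))]
    exact inv_anti₀ (pow_pos hκ'pos _) (pow_le_pow_left₀ (le_of_lt hκ'pos) (hd_ge j) _)
  have hEb : spec E ≤ (σ κ / σ κ') ^ (2 * q) * spec (T * Ω2 * P) := by
    calc spec E = spec (D2 * (T * X) * D1) := by rw [hE]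
      _ ≤ spec (D2 * (T * X)) * spec D1 := spec_mul_le _ _
      _ ≤ (spec D2 * spec (T * X)) * spec D1 :=
          mul_le_mul_of_nonneg_right (spec_mul_le _ _) (spec_nonneg _)
      _ ≤ (σ κ ^ (2 * q) * spec (T * X)) * (σ κ' ^ (2 * q))⁻¹ := by
          exact mul_le_mul (mul_le_mul_of_nonneg_right e3 (spec_nonneg _)) e4
            (spec_nonneg _) (mul_nonneg (pow_nonneg (hσ0 κ) _) (spec_nonneg _))
      _ = (σ κ / σ κ') ^ (2 * q) * spec (T * Ω2 * P) := by
          rw [← hTX, div_pow, div_eq_mul_inv]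
          ring
  have hE2 : spec E ^ 2 ≤ ((σ κ / σ κ') ^ (2 * q)) ^ 2 * spec (T * Ω2 * P) ^ 2 := by
    have h := pow_le_pow_left₀ (spec_nonneg E) hEb 2
    rwa [mul_pow] at h
  have hexp4 : ((σ κ / σ κ') ^ (2 * q)) ^ 2 = (σ κ / σ κ') ^ (4 * q) := by
    rw [← pow_mul]
    congr 1
    ring
  rw [hexp4] at hE2
  linarith

end
end

section
/- Let Ω ∈ ℝ^{n×ℓ} (k ≤ ℓ ≤ n) and set Z = Σ⊥ Ω̂₂. Suppose that ‖(1/ℓ) Z Zᵀ − Σ⊥Σ⊥ᵀ‖₂ ≤ η ‖Σ⊥‖₂² and ‖(1/ℓ) Ω̂₁ Ω̂₁ᵀ − I_k‖₂ ≤ ε, for some η > 0 and ε ∈ (0,1). Then ‖Σ⊥ Ω̂₂ Ω̂₁†‖₂² ≤ ( ‖(1/ℓ) Z Zᵀ − Σ⊥Σ⊥ᵀ‖₂ + ‖Σ⊥‖₂² ) / ( 1 − ‖(1/ℓ) Ω̂₁ Ω̂₁ᵀ − I_k‖₂ ) ≤ ‖Σ⊥‖₂² (1+η)/(1−ε). 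-/
open MeasureTheory Matrix

noncomputable section

open scoped Matrix.Norms.L2Operator

lemma spec_eq_norm {a b : ℕ} (A : Matrix (Fin a) (Fin b) ℝ) : spec A = ‖A‖ := rfl

def ev {p : ℕ} (x : Fin p → ℝ) : EuclideanSpace ℝ (Fin p) := (WithLp.equiv 2 _).symm x

lemma inner_ev {p : ℕ} (x y : Fin p → ℝ) : (inner ℝ (ev x) (ev y) : ℝ) = x ⬝ᵥ y := by
  simp [ev, PiLp.inner_apply, RCLike.inner_apply, dotProduct, mul_comm]

lemma dot_self_eq {p : ℕ} (x : Fin p → ℝ) : x ⬝ᵥ x = ‖ev x‖ ^ 2 := by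
  rw [← inner_ev, real_inner_self_eq_norm_sq]

lemma norm_mulVec_le {a b : ℕ} (A : Matrix (Fin a) (Fin b) ℝ) (x : Fin b → ℝ) :
    ‖ev (A *ᵥ x)‖ ≤ ‖A‖ * ‖ev x‖ := A.l2_opNorm_mulVec (ev x)

lemma norm_le_of_mulVec {a b : ℕ} (A : Matrix (Fin a) (Fin b) ℝ) (c : ℝ) (hc : 0 ≤ c)
    (h : ∀ x : Fin b → ℝ, ‖ev (A *ᵥ x)‖ ≤ c * ‖ev x‖) : ‖A‖ ≤ c := by
  rw [Matrix.l2_opNorm_def]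
  exact ContinuousLinearMap.opNorm_le_bound _ hc fun x => h (WithLp.equiv 2 _ x)

lemma spec_transpose {a b : ℕ} (A : Matrix (Fin a) (Fin b) ℝ) : ‖Aᵀ‖ = ‖A‖ := by
  rw [← Matrix.conjTranspose_eq_transpose_of_trivial, Matrix.l2_opNorm_conjTranspose]

lemma spec_mul_self {a b : ℕ} (A : Matrix (Fin a) (Fin b) ℝ) : ‖A * Aᵀ‖ = ‖A‖ ^ 2 := by
  have h := Matrix.l2_opNorm_conjTranspose_mul_self Aᵀ
  have h2 : (Aᵀ)ᴴ = A := by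
    rw [Matrix.conjTranspose_eq_transpose_of_trivial, Matrix.transpose_transpose]
  rw [h2, spec_transpose] at h
  rw [h, sq]

lemma quad_abs {p : ℕ} (M : Matrix (Fin p) (Fin p) ℝ) (x : Fin p → ℝ) :
    |(M *ᵥ x) ⬝ᵥ x| ≤ ‖M‖ * ‖ev x‖ ^ 2 := by
  rw [← inner_ev]
  calc |(inner ℝ (ev (M *ᵥ x)) (ev x) : ℝ)| ≤ ‖ev (M *ᵥ x)‖ * ‖ev x‖ :=
        abs_real_inner_le_norm _ _
    _ ≤ (‖M‖ * ‖ev x‖) * ‖ev x‖ :=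
        mul_le_mul_of_nonneg_right (norm_mulVec_le M x) (norm_nonneg _)
    _ = ‖M‖ * ‖ev x‖ ^ 2 := by ring

set_option maxHeartbeats 1000000 in
lemma pinv_norm_sq_le {a b : ℕ} (A : Matrix (Fin a) (Fin b) ℝ) (c : ℝ) (hc : 0 < c)
    (h : ∀ x : Fin a → ℝ, c * ‖ev x‖ ^ 2 ≤ ((A * Aᵀ) *ᵥ x) ⬝ᵥ x) :
    ‖pinv A‖ ^ 2 ≤ 1 / c := by
  set G := A * Aᵀ with hG
  have hGT : Gᵀ = G := by rw [hG, Matrix.transpose_mul, Matrix.transpose_transpose]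
  have hinj : ∀ x : Fin a → ℝ, G *ᵥ x = 0 → x = 0 := by
    intro x hx
    have := h x
    rw [hx, zero_dotProduct] at this
    have hx0 : ‖ev x‖ ^ 2 ≤ 0 := by nlinarith
    have : ev x = 0 := by
      have := norm_nonneg (ev x); have h2 : ‖ev x‖ = 0 := by nlinarith
      exact norm_eq_zero.mp h2
    simpa [ev] using congrArg (WithLp.equiv 2 (Fin a → ℝ)) this
  have hdet : IsUnit G.det := by
    rw [isUnit_iff_ne_zero]
    intro h0
    obtain ⟨v, hv0, hv⟩ := Matrix.exists_mulVec_eq_zero_iff.mpr h0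
    exact hv0 (hinj v hv)
  have hGG : G * G⁻¹ = 1 := Matrix.mul_nonsing_inv G hdet
  have hGG' : G⁻¹ * G = 1 := Matrix.nonsing_inv_mul G hdet
  have hGiT : (G⁻¹)ᵀ = G⁻¹ := by rw [Matrix.transpose_nonsing_inv, hGT]
  set C := Aᵀ * G⁻¹ with hC
  have hAC : A * C = 1 := by rw [hC, ← Matrix.mul_assoc, ← hG, hGG]
  have hCT : Cᵀ = G⁻¹ * A := by rw [hC, Matrix.transpose_mul, hGiT, Matrix.transpose_transpose]
  have hex : ∃ B : Matrix (Fin b) (Fin a) ℝ,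
      A * B * A = A ∧ B * A * B = B ∧ (A * B)ᵀ = A * B ∧ (B * A)ᵀ = B * A := by
    refine ⟨C, by rw [hAC, Matrix.one_mul], by rw [Matrix.mul_assoc, hAC, Matrix.mul_one],
      by rw [hAC]; simp, ?_⟩
    rw [Matrix.transpose_mul, hCT, hC, Matrix.mul_assoc]
  set B := pinv A with hB
  have hBspec : A * B * A = A ∧ B * A * B = B ∧ (A * B)ᵀ = A * B ∧ (B * A)ᵀ = B * A := by
    rw [hB, pinv, dif_pos hex]; exact hex.choose_spec
  obtain ⟨h1, h2, h3, h4⟩ := hBspec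
  have hABG : (A * B) * G = G := by rw [hG, ← Matrix.mul_assoc, h1]
  have hAB : A * B = 1 := by
    have := congrArg (· * G⁻¹) hABG
    simpa [Matrix.mul_assoc, hGG, Matrix.mul_one] using this
  have hBPC : B = (B * A) * C := by rw [Matrix.mul_assoc, hAC, Matrix.mul_one]
  set P := B * A with hP
  have hPP : P * P = P := by rw [hP, Matrix.mul_assoc, ← Matrix.mul_assoc A, hAB, Matrix.one_mul]
  have hPnorm : ‖P‖ ≤ 1 := by
    have hstar : Pᴴ = P := by rw [Matrix.conjTranspose_eq_transpose_of_trivial]; exact h4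
    have hcs : ‖Pᴴ * P‖ = ‖P‖ * ‖P‖ := Matrix.l2_opNorm_conjTranspose_mul_self P
    rw [hstar, hPP] at hcs
    nlinarith [norm_nonneg P]
  have hCC : Cᵀ * C = G⁻¹ := by
    rw [hCT, hC, Matrix.mul_assoc, ← Matrix.mul_assoc A, ← hG, hGG, Matrix.mul_one]
  have hCnorm : ‖C‖ ^ 2 = ‖G⁻¹‖ := by
    have := Matrix.l2_opNorm_conjTranspose_mul_self C
    rw [Matrix.conjTranspose_eq_transpose_of_trivial, hCC] at this
    rw [sq, ← this]
  have hGinorm : ‖G⁻¹‖ ≤ 1 / c := by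
    refine norm_le_of_mulVec _ _ (by positivity) fun x => ?_
    set z := G⁻¹ *ᵥ x with hz
    have hGz : G *ᵥ z = x := by
      rw [hz, Matrix.mulVec_mulVec, hGG, Matrix.one_mulVec]
    have hq : c * ‖ev z‖ ^ 2 ≤ (G *ᵥ z) ⬝ᵥ z := h z
    rw [hGz, ← inner_ev] at hq
    have hip : (inner ℝ (ev x) (ev z) : ℝ) ≤ ‖ev x‖ * ‖ev z‖ := real_inner_le_norm _ _
    rcases eq_or_lt_of_le (norm_nonneg (ev z)) with hz0 | hz0
    · rw [← hz0]; positivity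
    · rw [div_mul_eq_mul_div, le_div_iff₀ hc]
      nlinarith
  have hBC : ‖B‖ ≤ ‖C‖ := by
    calc ‖B‖ = ‖P * C‖ := by rw [← hBPC]
      _ ≤ ‖P‖ * ‖C‖ := Matrix.l2_opNorm_mul _ _
      _ ≤ 1 * ‖C‖ := mul_le_mul_of_nonneg_right hPnorm (norm_nonneg _)
      _ = ‖C‖ := one_mul _
  calc ‖B‖ ^ 2 ≤ ‖C‖ ^ 2 := by nlinarith [norm_nonneg B, norm_nonneg C]
    _ = ‖G⁻¹‖ := hCnorm
    _ ≤ 1 / c := hGinorm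


set_option maxHeartbeats 1000000 in
/-- **Lemma (sample covariance interpretation).**
If `‖(1/ℓ)ZZᵀ − Σ⊥Σ⊥ᵀ‖₂ ≤ η‖Σ⊥‖₂²` and `‖(1/ℓ)Ω̂₁Ω̂₁ᵀ − I‖₂ ≤ ε` with `η > 0`,
`ε ∈ (0,1)`, and `Z = Σ⊥Ω̂₂`, then
`‖Σ⊥Ω̂₂Ω̂₁†‖₂² ≤ (‖(1/ℓ)ZZᵀ − Σ⊥Σ⊥ᵀ‖₂ + ‖Σ⊥‖₂²)/(1 − ‖(1/ℓ)Ω̂₁Ω̂₁ᵀ − I‖₂)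
  ≤ ‖Σ⊥‖₂²(1+η)/(1−ε)`. -/
theorem sample_covariance_bound
    (m n k ℓ : ℕ) (hmn : n ≤ m) (hk0 : 0 < k) (hkn : k < n) (hkl : k ≤ ℓ) (hln : ℓ ≤ n)
    (σ : Fin n → ℝ) (hσ0 : ∀ i, 0 ≤ σ i)
    (hσmono : ∀ i j : Fin n, i ≤ j → σ j ≤ σ i)
    (hgap : σ ⟨k, hkn⟩ < σ ⟨k - 1, Nat.lt_of_le_of_lt (Nat.sub_le k 1) hkn⟩)
    (U : Matrix (Fin m) (Fin n) ℝ) (V : Matrix (Fin n) (Fin n) ℝ)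
    (hU : Uᵀ * U = 1) (hV : Vᵀ * V = 1)
    (A : Matrix (Fin m) (Fin n) ℝ) (hA : A = U * Matrix.diagonal σ * Vᵀ)
    (hperp : tailDiag k σ ≠ 0)
    (W : Matrix (Fin n) (Fin ℓ) ℝ)
    (η ε : ℝ) (hη : 0 < η) (hε0 : 0 < ε) (hε1 : ε < 1)
    (hZ : spec ((ℓ : ℝ)⁻¹ •
            ((tailDiag k σ * ((colsRight k V)ᵀ * W)) *
              (tailDiag k σ * ((colsRight k V)ᵀ * W))ᵀ) -
            tailDiag k σ * (tailDiag k σ)ᵀ) ≤ η * spec (tailDiag k σ) ^ 2)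
    (hΩ1 : spec ((ℓ : ℝ)⁻¹ •
            (((colsLeft k hkn.le V)ᵀ * W) * ((colsLeft k hkn.le V)ᵀ * W)ᵀ) - 1) ≤ ε) :
    spec (tailDiag k σ * ((colsRight k V)ᵀ * W) * pinv ((colsLeft k hkn.le V)ᵀ * W)) ^ 2 ≤
      (spec ((ℓ : ℝ)⁻¹ •
          ((tailDiag k σ * ((colsRight k V)ᵀ * W)) *
            (tailDiag k σ * ((colsRight k V)ᵀ * W))ᵀ) -
          tailDiag k σ * (tailDiag k σ)ᵀ) + spec (tailDiag k σ) ^ 2) /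
        (1 - spec ((ℓ : ℝ)⁻¹ •
          (((colsLeft k hkn.le V)ᵀ * W) * ((colsLeft k hkn.le V)ᵀ * W)ᵀ) - 1)) ∧
    (spec ((ℓ : ℝ)⁻¹ •
        ((tailDiag k σ * ((colsRight k V)ᵀ * W)) *
          (tailDiag k σ * ((colsRight k V)ᵀ * W))ᵀ) -
        tailDiag k σ * (tailDiag k σ)ᵀ) + spec (tailDiag k σ) ^ 2) /
      (1 - spec ((ℓ : ℝ)⁻¹ •
        (((colsLeft k hkn.le V)ᵀ * W) * ((colsLeft k hkn.le V)ᵀ * W)ᵀ) - 1)) ≤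
      spec (tailDiag k σ) ^ 2 * (1 + η) / (1 - ε) := by
  simp only [spec_eq_norm] at hZ hΩ1 ⊢
  set A₁ := (colsLeft k hkn.le V)ᵀ * W with hA₁
  set Z := tailDiag k σ * ((colsRight k V)ᵀ * W) with hZdef
  set M₁ := (ℓ : ℝ)⁻¹ • (A₁ * A₁ᵀ) - 1 with hM₁
  set MZ := (ℓ : ℝ)⁻¹ • (Z * Zᵀ) - tailDiag k σ * (tailDiag k σ)ᵀ with hMZ
  have hℓ : (0 : ℝ) < (ℓ : ℝ) := by
    have : 0 < ℓ := lt_of_lt_of_le hk0 hkl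
    exact_mod_cast this
  have h1ε : 0 < 1 - ‖M₁‖ := by linarith
  have hc : 0 < (ℓ : ℝ) * (1 - ‖M₁‖) := mul_pos hℓ h1ε
  -- quadratic form lower bound for A₁ A₁ᵀ
  have hqf : ∀ x : Fin k → ℝ,
      ((ℓ : ℝ) * (1 - ‖M₁‖)) * ‖ev x‖ ^ 2 ≤ ((A₁ * A₁ᵀ) *ᵥ x) ⬝ᵥ x := by
    intro x
    have hkey : (M₁ *ᵥ x) ⬝ᵥ x
        = (ℓ : ℝ)⁻¹ * (((A₁ * A₁ᵀ) *ᵥ x) ⬝ᵥ x) - ‖ev x‖ ^ 2 := by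
      rw [hM₁, Matrix.sub_mulVec, sub_dotProduct, Matrix.one_mulVec,
        Matrix.smul_mulVec, smul_dotProduct, dot_self_eq, smul_eq_mul]
    have habs := quad_abs M₁ x
    have hlow : -(‖M₁‖ * ‖ev x‖ ^ 2) ≤ (M₁ *ᵥ x) ⬝ᵥ x := neg_le_of_abs_le habs
    rw [hkey] at hlow
    have hmul := mul_le_mul_of_nonneg_left hlow hℓ.le
    have hQ : (ℓ : ℝ) * ((ℓ : ℝ)⁻¹ * (((A₁ * A₁ᵀ) *ᵥ x) ⬝ᵥ x)) = ((A₁ * A₁ᵀ) *ᵥ x) ⬝ᵥ x := by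
      rw [← mul_assoc, mul_inv_cancel₀ hℓ.ne', one_mul]
    nlinarith [hmul, hQ]
  have hp := pinv_norm_sq_le A₁ _ hc hqf
  -- bound on ‖Z Zᵀ‖
  have hs := spec_mul_self (tailDiag k σ)
  have hZfac : Z * Zᵀ = (ℓ : ℝ) • (MZ + tailDiag k σ * (tailDiag k σ)ᵀ) := by
    rw [hMZ, sub_add_cancel, smul_smul, mul_inv_cancel₀ hℓ.ne', one_smul]
  have hZZ : ‖Z * Zᵀ‖ ≤ (ℓ : ℝ) * (‖MZ‖ + ‖tailDiag k σ‖ ^ 2) := by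
    rw [hZfac, norm_smul, Real.norm_eq_abs, abs_of_pos hℓ]
    refine mul_le_mul_of_nonneg_left ?_ hℓ.le
    calc ‖MZ + tailDiag k σ * (tailDiag k σ)ᵀ‖
        ≤ ‖MZ‖ + ‖tailDiag k σ * (tailDiag k σ)ᵀ‖ := norm_add_le _ _
      _ = ‖MZ‖ + ‖tailDiag k σ‖ ^ 2 := by rw [hs]
  have hZZ' : ‖Z‖ ^ 2 ≤ (ℓ : ℝ) * (‖MZ‖ + ‖tailDiag k σ‖ ^ 2) :=
    calc ‖Z‖ ^ 2 = ‖Z * Zᵀ‖ := (spec_mul_self Z).symm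
      _ ≤ _ := hZZ
  constructor
  · -- first inequality
    have ha : ‖Z * pinv A₁‖ ≤ ‖Z‖ * ‖pinv A₁‖ := Matrix.l2_opNorm_mul _ _
    have e1 : ‖Z * pinv A₁‖ ^ 2 ≤ ‖Z‖ ^ 2 * ‖pinv A₁‖ ^ 2 := by
      nlinarith [norm_nonneg (Z * pinv A₁), norm_nonneg Z, norm_nonneg (pinv A₁)]
    have e2 : ‖Z‖ ^ 2 * ‖pinv A₁‖ ^ 2
        ≤ ((ℓ : ℝ) * (‖MZ‖ + ‖tailDiag k σ‖ ^ 2)) * (1 / ((ℓ : ℝ) * (1 - ‖M₁‖))) := by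
      refine mul_le_mul hZZ' hp (sq_nonneg _) ?_
      exact le_trans (sq_nonneg ‖Z‖) hZZ'
    have heq : ((ℓ : ℝ) * (‖MZ‖ + ‖tailDiag k σ‖ ^ 2)) * (1 / ((ℓ : ℝ) * (1 - ‖M₁‖)))
        = (‖MZ‖ + ‖tailDiag k σ‖ ^ 2) / (1 - ‖M₁‖) := by
      field_simp
    rw [heq] at e2
    exact le_trans e1 e2
  · -- second inequality
    have hnum0 : 0 ≤ ‖MZ‖ + ‖tailDiag k σ‖ ^ 2 := by positivity
    have hnum : ‖MZ‖ + ‖tailDiag k σ‖ ^ 2 ≤ ‖tailDiag k σ‖ ^ 2 * (1 + η) := by nlinarith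
    have h1 : (0 : ℝ) < 1 - ε := by linarith
    have h2 : 1 - ε ≤ 1 - ‖M₁‖ := by linarith
    exact div_le_div₀ (by nlinarith [sq_nonneg ‖tailDiag k σ‖]) hnum h1 h2

end
end
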